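/- Let μ > 0, let f : ℝ → ℝ be a positive, nonincreasing, continuous function with f(y) ≤ μ/2 for all y ∈ ℝ, let z > 0, let S : [0,∞) → [0,∞) be right-continuous nondecreasing with S(0) = 0, let Y solve Y_t = z − S_t + ∫_0^t f(Y_s) ds, and let ρ be the continuous solution of ρ_t = z − μt + ∫_0^t f(ρ_s) ds (so ρ is strictly decreasing with derivative f(ρ_t) − μ ≤ −μ/2). Then for every t ≥ 0, |∫_0^t f(Y_s) ds − ∫_0^t f(ρ_s) ds| ≤ (4/μ) · M_t · f(ρ_t − 2M_t), where M_t := sup_{0 ≤ u ≤ t} |S_u − μu|. -/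

import Mathlib

open MeasureTheory Filter Set

/-- A continuous function on `[0, c]` that starts below level `m` and which decreases over any
interval on which it exceeds `m` stays below `m`. -/
lemma no_upcross {J : ℝ → ℝ} {c m : ℝ} (hc : 0 ≤ c)
    (hJcont : ContinuousOn J (Icc 0 c)) (h0 : J 0 ≤ m)
    (hdec : ∀ a b : ℝ, 0 ≤ a → a < b → b ≤ c → (∀ s ∈ Ioc a b, m < J s) → J b ≤ J a) :
    ∀ s ∈ Icc (0 : ℝ) c, J s ≤ m := by
  intro s hs
  by_contra hgt
  push_neg at hgt
  have hsub : Icc (0:ℝ) s ⊆ Icc 0 c := Icc_subset_Icc le_rfl hs.2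
  have hclosed : IsClosed (Icc (0:ℝ) s ∩ J ⁻¹' (Iic m)) :=
    (hJcont.mono hsub).preimage_isClosed_of_isClosed isClosed_Icc isClosed_Iic
  have h0A : (0:ℝ) ∈ Icc (0:ℝ) s ∩ J ⁻¹' (Iic m) := ⟨⟨le_rfl, hs.1⟩, h0⟩
  have hbdd : BddAbove (Icc (0:ℝ) s ∩ J ⁻¹' (Iic m)) := ⟨s, fun x hx => hx.1.2⟩
  set σ := sSup (Icc (0:ℝ) s ∩ J ⁻¹' (Iic m)) with hσdef
  have hσA : σ ∈ Icc (0:ℝ) s ∩ J ⁻¹' (Iic m) := hclosed.csSup_mem ⟨0, h0A⟩ hbdd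
  have hσ0 : 0 ≤ σ := hσA.1.1
  have hσs : σ ≤ s := hσA.1.2
  have hσlt : σ < s := by
    rcases lt_or_eq_of_le hσs with h | h
    · exact h
    · exfalso; rw [h] at hσA; exact absurd hσA.2 (not_le.mpr hgt)
  have hmid : ∀ u ∈ Ioc σ s, m < J u := by
    intro u hu
    by_contra hle
    push_neg at hle
    have hmem : u ∈ Icc (0:ℝ) s ∩ J ⁻¹' (Iic m) := ⟨⟨hσ0.trans hu.1.le, hu.2⟩, hle⟩
    exact absurd (le_csSup hbdd hmem) (not_le.mpr hu.1)
  have := hdec σ s hσ0 hσlt hs.2 hmid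
  exact absurd (this.trans hσA.2) (not_le.mpr hgt)

/-- Deterministic pathwise estimate: with `μ > 0`, `f` positive, nonincreasing,
continuous and `f ≤ μ/2` everywhere, `z > 0`, `S : [0,∞) → [0,∞)` right-continuous
nondecreasing with `S 0 = 0`, `Y` a right-continuous solution of
`Y t = z - S t + ∫_0^t f (Y s) ds` and `ρ` the continuous solution of
`ρ t = z - μ t + ∫_0^t f (ρ s) ds`, one has for every `t ≥ 0`
`|∫_0^t f (Y s) ds - ∫_0^t f (ρ s) ds| ≤ (4/μ) M_t f (ρ t - 2 M_t)`,
where `M_t := sup_{0 ≤ u ≤ t} |S u - μ u|`. -/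
theorem pathwise_drift_estimate
    (μ : ℝ) (hμ : 0 < μ)
    (f : ℝ → ℝ) (hfpos : ∀ y, 0 < f y) (hfanti : Antitone f) (hfcont : Continuous f)
    (hfhalf : ∀ y, f y ≤ μ / 2)
    (z : ℝ) (hz : 0 < z)
    (S : ℝ → ℝ) (hS0 : S 0 = 0) (hSnonneg : ∀ t ≥ (0 : ℝ), 0 ≤ S t)
    (hSmono : MonotoneOn S (Ici (0 : ℝ)))
    (hSrc : ∀ t ≥ (0 : ℝ), ContinuousWithinAt S (Ici t) t)
    (Y : ℝ → ℝ)
    (hYrc : ∀ t ≥ (0 : ℝ), ContinuousWithinAt Y (Ici t) t)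
    (hYint : ∀ t ≥ (0 : ℝ), IntervalIntegrable (fun s => f (Y s)) volume 0 t)
    (hY : ∀ t ≥ (0 : ℝ), Y t = z - S t + ∫ s in (0 : ℝ)..t, f (Y s))
    (ρ : ℝ → ℝ) (hρcont : ContinuousOn ρ (Ici (0 : ℝ)))
    (hρ : ∀ t ≥ (0 : ℝ), ρ t = z - μ * t + ∫ s in (0 : ℝ)..t, f (ρ s))
    (t : ℝ) (ht : 0 ≤ t) :
    |(∫ s in (0 : ℝ)..t, f (Y s)) - ∫ s in (0 : ℝ)..t, f (ρ s)| ≤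
      (4 / μ) * sSup ((fun u => |S u - μ * u|) '' Icc 0 t) *
        f (ρ t - 2 * sSup ((fun u => |S u - μ * u|) '' Icc 0 t)) := by
  rcases eq_or_lt_of_le ht with h0 | htpos
  · subst h0
    simp [Set.Icc_self, Set.image_singleton, hS0]
  set M := sSup ((fun u => |S u - μ * u|) '' Icc 0 t) with hMdef
  have huIcc : uIcc (0:ℝ) t = Icc 0 t := uIcc_of_le ht
  -- basic facts about M
  have hbddM : BddAbove ((fun u => |S u - μ * u|) '' Icc 0 t) := by
    refine ⟨S t + μ * t, ?_⟩
    rintro x ⟨u, hu, rfl⟩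
    have h1 : 0 ≤ S u := hSnonneg u hu.1
    have h2 : S u ≤ S t := hSmono hu.1 ht hu.2
    have h3 : 0 ≤ μ * u := mul_nonneg hμ.le hu.1
    have h4 : μ * u ≤ μ * t := by nlinarith [hu.2]
    rw [abs_le]; constructor <;> nlinarith
  have hMub : ∀ u ∈ Icc (0:ℝ) t, |S u - μ * u| ≤ M := fun u hu =>
    le_csSup hbddM ⟨u, hu, rfl⟩
  have hM0 : 0 ≤ M := by
    have h := hMub 0 ⟨le_rfl, ht⟩
    simp [hS0] at h
    linarith [abs_nonneg (S 0 - μ * 0), hMub 0 ⟨le_rfl, ht⟩]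
  -- integrability helpers
  have hρcontI : ContinuousOn ρ (uIcc 0 t) := hρcont.mono (by rw [huIcc]; exact Icc_subset_Ici_self)
  have hfρint : ∀ a b : ℝ, a ∈ Icc (0:ℝ) t → b ∈ Icc (0:ℝ) t →
      IntervalIntegrable (fun s => f (ρ s)) volume a b := by
    intro a b ha hb
    apply ContinuousOn.intervalIntegrable
    apply hfcont.comp_continuousOn
    apply hρcont.mono
    exact (uIcc_subset_Icc ha hb).trans Icc_subset_Ici_self
  have hfYint2 : ∀ a b : ℝ, a ∈ Icc (0:ℝ) t → b ∈ Icc (0:ℝ) t →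
      IntervalIntegrable (fun s => f (Y s)) volume a b := by
    intro a b ha hb
    exact (hYint t ht).mono_set (by rw [huIcc]; exact uIcc_subset_Icc ha hb)
  have h0mem : (0:ℝ) ∈ Icc (0:ℝ) t := ⟨le_rfl, ht⟩
  have htmem : t ∈ Icc (0:ℝ) t := ⟨ht, le_rfl⟩
  -- the difference of primitives
  set I : ℝ → ℝ := fun s => (∫ u in (0:ℝ)..s, f (Y u)) - ∫ u in (0:ℝ)..s, f (ρ u) with hIdef
  have hI0 : I 0 = 0 := by simp [hIdef]
  have hIsub : ∀ a b : ℝ, a ∈ Icc (0:ℝ) t → b ∈ Icc (0:ℝ) t →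
      I b - I a = ∫ u in a..b, (f (Y u) - f (ρ u)) := by
    intro a b ha hb
    have h1 : (∫ u in (0:ℝ)..b, f (Y u)) - ∫ u in (0:ℝ)..a, f (Y u) = ∫ u in a..b, f (Y u) :=
      intervalIntegral.integral_interval_sub_left (hfYint2 0 b h0mem hb) (hfYint2 0 a h0mem ha)
    have h2 : (∫ u in (0:ℝ)..b, f (ρ u)) - ∫ u in (0:ℝ)..a, f (ρ u) = ∫ u in a..b, f (ρ u) :=
      intervalIntegral.integral_interval_sub_left (hfρint 0 b h0mem hb) (hfρint 0 a h0mem ha)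
    rw [intervalIntegral.integral_sub (hfYint2 a b ha hb) (hfρint a b ha hb), ← h1, ← h2]
    simp only [hIdef]; ring
  -- I is Lipschitz on [0,t], hence continuous there
  have hIcont : ContinuousOn I (Icc 0 t) := by
    have hlip : LipschitzOnWith ⟨μ, hμ.le⟩ I (Icc 0 t) := by
      apply LipschitzOnWith.of_dist_le_mul
      intro x hx y hy
      rw [Real.dist_eq, Real.dist_eq, hIsub y x hy hx]
      have hb := intervalIntegral.norm_integral_le_of_norm_le_const
        (C := μ) (f := fun u => f (Y u) - f (ρ u)) (a := y) (b := x) ?_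
      · show _ ≤ μ * _
        simpa [Real.norm_eq_abs, abs_sub_comm x y] using hb
      · intro u _
        have h1 := hfpos (Y u); have h2 := hfpos (ρ u)
        have h3 := hfhalf (Y u); have h4 := hfhalf (ρ u)
        show ‖f (Y u) - f (ρ u)‖ ≤ μ
        rw [Real.norm_eq_abs, abs_le]
        constructor <;> nlinarith
    exact hlip.continuousOn
  -- the drift identity
  have hDeq : ∀ s ∈ Icc (0:ℝ) t, Y s - ρ s = (μ * s - S s) + I s := by
    intro s hs
    have h1 := hY s hs.1
    have h2 := hρ s hs.1
    simp only [hIdef]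
    rw [h1, h2]; ring
  -- upper crossing estimate : I ≤ M on [0,t]
  have hup : ∀ s ∈ Icc (0:ℝ) t, I s ≤ M := by
    apply no_upcross ht hIcont (by rw [hI0]; exact hM0)
    intro a b ha hab hbt hmid
    have hale : a ∈ Icc (0:ℝ) t := ⟨ha, hab.le.trans hbt⟩
    have hble : b ∈ Icc (0:ℝ) t := ⟨ha.trans hab.le, hbt⟩
    have key : I b - I a ≤ 0 := by
      rw [hIsub a b hale hble, intervalIntegral.integral_of_le hab.le]
      apply setIntegral_nonpos measurableSet_Ioc
      intro u hu
      have huI : u ∈ Icc (0:ℝ) t := ⟨ha.trans hu.1.le, hu.2.trans hbt⟩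
      have hIu := hmid u hu
      have hSu := hMub u huI
      rw [abs_le] at hSu
      have hYρ : ρ u ≤ Y u := by
        have := hDeq u huI
        nlinarith [hSu.1]
      exact sub_nonpos.mpr (hfanti hYρ)
    linarith
  -- lower crossing estimate : -M ≤ I on [0,t]
  have hdown : ∀ s ∈ Icc (0:ℝ) t, -M ≤ I s := by
    intro s hs
    have key := no_upcross (J := fun u => -I u) (m := M) ht hIcont.neg
      (by simp [hI0]; exact hM0) ?_ s hs
    · simpa using neg_le.mp (by simpa using key)
    · intro a b ha hab hbt hmid
      have hale : a ∈ Icc (0:ℝ) t := ⟨ha, hab.le.trans hbt⟩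
      have hble : b ∈ Icc (0:ℝ) t := ⟨ha.trans hab.le, hbt⟩
      have key2 : 0 ≤ I b - I a := by
        rw [hIsub a b hale hble, intervalIntegral.integral_of_le hab.le]
        apply setIntegral_nonneg measurableSet_Ioc
        intro u hu
        have huI : u ∈ Icc (0:ℝ) t := ⟨ha.trans hu.1.le, hu.2.trans hbt⟩
        have hIu := hmid u hu
        have hIu : M < -I u := hIu
        have hSu := hMub u huI
        rw [abs_le] at hSu
        have hYρ : Y u ≤ ρ u := by
          have := hDeq u huI
          nlinarith [hSu.2, hIu]
        exact sub_nonneg.mpr (hfanti hYρ)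
      simp only [neg_le_neg_iff]
      linarith
  -- pathwise bound |Y - ρ| ≤ 2M
  have hYbd : ∀ s ∈ Icc (0:ℝ) t, ρ s - 2*M ≤ Y s ∧ Y s ≤ ρ s + 2*M := by
    intro s hs
    have h1 := hup s hs
    have h2 := hdown s hs
    have h3 := hMub s hs
    have h4 := hDeq s hs
    rw [abs_le] at h3
    constructor <;> nlinarith [h3.1, h3.2]
  -- ρ is decreasing from ρ 0 = z to ρ t
  have hρ0 : ρ 0 = z := by
    have := hρ 0 le_rfl
    simpa using this
  have hρts : ρ t ≤ ρ 0 := by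
    have hconst : ∫ s in (0:ℝ)..t, f (ρ s) ≤ ∫ s in (0:ℝ)..t, (μ/2) := by
      apply intervalIntegral.integral_mono_on ht (hfρint 0 t h0mem htmem)
        intervalIntegrable_const
      intro x _
      exact hfhalf (ρ x)
    rw [intervalIntegral.integral_const, smul_eq_mul] at hconst
    rw [hρ0, hρ t ht]
    nlinarith
  -- derivative of ρ on (0, t)
  have hρ'cont : Continuous (fun s => ρ (max s 0)) :=
    hρcont.comp_continuous (continuous_id.max continuous_const) (fun x => mem_Ici.mpr (le_max_right _ _))
  have hGd : ∀ s : ℝ, HasDerivAt (fun r => ∫ u in (0:ℝ)..r, f (ρ (max u 0))) (f (ρ (max s 0))) s :=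
    fun s => ((hfcont.comp hρ'cont).integral_hasStrictDerivAt 0 s).hasDerivAt
  have hheq : ∀ s : ℝ, 0 ≤ s → ρ s = z - μ * s + ∫ u in (0:ℝ)..s, f (ρ (max u 0)) := by
    intro s hs
    rw [hρ s hs]
    congr 1
    apply intervalIntegral.integral_congr
    intro u hu
    rw [uIcc_of_le hs] at hu
    simp [max_eq_left hu.1]
  have hhd : ∀ s : ℝ, HasDerivAt (fun r => z - μ * r + ∫ u in (0:ℝ)..r, f (ρ (max u 0)))
      (f (ρ (max s 0)) - μ) s := by
    intro s
    have h1 : HasDerivAt (fun r : ℝ => z - μ * r) (-μ) s := by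
      simpa using ((hasDerivAt_id s).const_mul μ).const_sub z
    have h2 := h1.add (hGd s)
    rw [show f (ρ (max s 0)) - μ = -μ + f (ρ (max s 0)) by ring]
    exact h2
  have hρderiv : ∀ x ∈ Ioo (0:ℝ) t, HasDerivWithinAt ρ (f (ρ x) - μ) (Ioi x) x := by
    intro x hx
    have h := (hhd x).hasDerivWithinAt (s := Ioi x)
    have heq : ∀ y ∈ Ioi x, ρ y = z - μ * y + ∫ u in (0:ℝ)..y, f (ρ (max u 0)) :=
      fun y hy => hheq y (hx.1.le.trans (le_of_lt hy))
    have h2 := h.congr heq (hheq x hx.1.le)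
    rwa [max_eq_left hx.1.le] at h2
  have hφcont : ContinuousOn (fun s => f (ρ s) - μ) (uIcc 0 t) :=
    (hfcont.comp_continuousOn hρcontI).sub continuousOn_const
  -- change of variables
  have hsub : ∀ g : ℝ → ℝ, Continuous g →
      ∫ x in (0:ℝ)..t, g (ρ x) * (f (ρ x) - μ) = ∫ u in (ρ 0)..(ρ t), g u := by
    intro g hg
    have h := intervalIntegral.integral_comp_mul_deriv'' (f := ρ)
      (f' := fun s => f (ρ s) - μ) (g := g) hρcontI ?_ hφcont hg.continuousOn
    · simpa [Function.comp] using h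
    · rw [min_eq_left ht, max_eq_right ht]
      exact hρderiv
  -- the key integral comparison
  have key2 : ∀ g : ℝ → ℝ, Continuous g → (∀ x, 0 ≤ g x) →
      ∫ s in (0:ℝ)..t, g (ρ s) ≤ 2/μ * ∫ u in (ρ t)..(ρ 0), g u := by
    intro g hg hgnn
    have hgρc : ContinuousOn (fun s => g (ρ s)) (uIcc 0 t) := hg.comp_continuousOn hρcontI
    have h1 : ∫ s in (0:ℝ)..t, g (ρ s) ≤
        ∫ s in (0:ℝ)..t, 2/μ * (g (ρ s) * (μ - f (ρ s))) := by
      apply intervalIntegral.integral_mono_on ht hgρc.intervalIntegrable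
      · exact (continuousOn_const.mul (hgρc.mul
          (continuousOn_const.sub (hfcont.comp_continuousOn hρcontI)))).intervalIntegrable
      · intro x _
        have h2 := hfhalf (ρ x)
        have h3 := hgnn (ρ x)
        rw [div_mul_eq_mul_div, le_div_iff₀ hμ]
        nlinarith
    have h2 : ∫ s in (0:ℝ)..t, 2/μ * (g (ρ s) * (μ - f (ρ s))) =
        2/μ * ∫ s in (0:ℝ)..t, g (ρ s) * (μ - f (ρ s)) :=
      intervalIntegral.integral_const_mul _ _
    have h3 : ∫ s in (0:ℝ)..t, g (ρ s) * (μ - f (ρ s)) =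
        - ∫ s in (0:ℝ)..t, g (ρ s) * (f (ρ s) - μ) := by
      rw [← intervalIntegral.integral_neg]
      congr 1
      ext s
      ring
    have h4 := hsub g hg
    have h5 : ∫ u in (ρ 0)..(ρ t), g u = - ∫ u in (ρ t)..(ρ 0), g u :=
      intervalIntegral.integral_symm _ _
    rw [h2, h3, h4, h5] at h1
    simpa using h1
  have hfi : ∀ p q : ℝ, IntervalIntegrable f volume p q := fun p q => hfcont.intervalIntegrable p q
  -- shifted-difference integral bounds
  have hshift_up : ∫ u in (ρ t)..(ρ 0), (f (u - 2*M) - f u) ≤ 2*M * f (ρ t - 2*M) := by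
    have e1 : ∫ u in (ρ t)..(ρ 0), (f (u - 2*M) - f u) =
        (∫ u in (ρ t)..(ρ 0), f (u - 2*M)) - ∫ u in (ρ t)..(ρ 0), f u :=
      intervalIntegral.integral_sub
        ((hfcont.comp (continuous_id.sub continuous_const)).intervalIntegrable _ _) (hfi _ _)
    have e2 : ∫ u in (ρ t)..(ρ 0), f (u - 2*M) = ∫ u in (ρ t - 2*M)..(ρ 0 - 2*M), f u :=
      intervalIntegral.integral_comp_sub_right f (2*M)
    have e3 : (∫ u in (ρ t - 2*M)..(ρ t), f u) + (∫ u in (ρ t)..(ρ 0 - 2*M), f u) =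
        ∫ u in (ρ t - 2*M)..(ρ 0 - 2*M), f u :=
      intervalIntegral.integral_add_adjacent_intervals (hfi _ _) (hfi _ _)
    have e4 : (∫ u in (ρ t)..(ρ 0 - 2*M), f u) + (∫ u in (ρ 0 - 2*M)..(ρ 0), f u) =
        ∫ u in (ρ t)..(ρ 0), f u :=
      intervalIntegral.integral_add_adjacent_intervals (hfi _ _) (hfi _ _)
    have e5 : ∫ u in (ρ t - 2*M)..(ρ t), f u ≤ 2*M * f (ρ t - 2*M) := by
      have h := intervalIntegral.integral_mono_on (by linarith : ρ t - 2*M ≤ ρ t)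
        (hfi _ _) intervalIntegrable_const (fun x hx => hfanti hx.1)
      rw [intervalIntegral.integral_const, smul_eq_mul] at h
      calc (∫ u in (ρ t - 2*M)..(ρ t), f u) ≤ (ρ t - (ρ t - 2*M)) * f (ρ t - 2*M) := h
        _ = 2*M * f (ρ t - 2*M) := by ring
    have e6 : 0 ≤ ∫ u in (ρ 0 - 2*M)..(ρ 0), f u :=
      intervalIntegral.integral_nonneg (by linarith) (fun u _ => (hfpos u).le)
    linarith
  have hshift_dn : ∫ u in (ρ t)..(ρ 0), (f u - f (u + 2*M)) ≤ 2*M * f (ρ t - 2*M) := by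
    have e1 : ∫ u in (ρ t)..(ρ 0), (f u - f (u + 2*M)) =
        (∫ u in (ρ t)..(ρ 0), f u) - ∫ u in (ρ t)..(ρ 0), f (u + 2*M) :=
      intervalIntegral.integral_sub (hfi _ _)
        ((hfcont.comp (continuous_id.add continuous_const)).intervalIntegrable _ _)
    have e2 : ∫ u in (ρ t)..(ρ 0), f (u + 2*M) = ∫ u in (ρ t + 2*M)..(ρ 0 + 2*M), f u :=
      intervalIntegral.integral_comp_add_right f (2*M)
    have e3 : (∫ u in (ρ t)..(ρ t + 2*M), f u) + (∫ u in (ρ t + 2*M)..(ρ 0), f u) =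
        ∫ u in (ρ t)..(ρ 0), f u :=
      intervalIntegral.integral_add_adjacent_intervals (hfi _ _) (hfi _ _)
    have e4 : (∫ u in (ρ t + 2*M)..(ρ 0), f u) + (∫ u in (ρ 0)..(ρ 0 + 2*M), f u) =
        ∫ u in (ρ t + 2*M)..(ρ 0 + 2*M), f u :=
      intervalIntegral.integral_add_adjacent_intervals (hfi _ _) (hfi _ _)
    have e5 : ∫ u in (ρ t)..(ρ t + 2*M), f u ≤ 2*M * f (ρ t - 2*M) := by
      have h := intervalIntegral.integral_mono_on (by linarith : ρ t ≤ ρ t + 2*M)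
        (hfi _ _) intervalIntegrable_const (fun x hx => hfanti hx.1)
      rw [intervalIntegral.integral_const, smul_eq_mul] at h
      have h2 : f (ρ t) ≤ f (ρ t - 2*M) := hfanti (by linarith)
      calc (∫ u in (ρ t)..(ρ t + 2*M), f u) ≤ (ρ t + 2*M - ρ t) * f (ρ t) := h
        _ = 2*M * f (ρ t) := by ring
        _ ≤ 2*M * f (ρ t - 2*M) := by nlinarith [hfpos (ρ t)]
    have e6 : 0 ≤ ∫ u in (ρ 0)..(ρ 0 + 2*M), f u :=
      intervalIntegral.integral_nonneg (by linarith) (fun u _ => (hfpos u).le)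
    linarith
  -- assemble the final bound
  have hItdef : (∫ s in (0:ℝ)..t, f (Y s)) - (∫ s in (0:ℝ)..t, f (ρ s)) = I t := by
    simp [hIdef]
  have hIteq : I t = ∫ u in (0:ℝ)..t, (f (Y u) - f (ρ u)) := by
    have := hIsub 0 t h0mem htmem
    rw [hI0] at this
    simpa using this
  have hupcont : ContinuousOn (fun s => f (ρ s - 2*M) - f (ρ s)) (uIcc 0 t) :=
    (hfcont.comp_continuousOn (hρcontI.sub continuousOn_const)).sub
      (hfcont.comp_continuousOn hρcontI)
  have hdncont : ContinuousOn (fun s => f (ρ s + 2*M) - f (ρ s)) (uIcc 0 t) :=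
    (hfcont.comp_continuousOn (hρcontI.add continuousOn_const)).sub
      (hfcont.comp_continuousOn hρcontI)
  have hfYρint : IntervalIntegrable (fun u => f (Y u) - f (ρ u)) volume 0 t :=
    (hfYint2 0 t h0mem htmem).sub (hfρint 0 t h0mem htmem)
  -- upper bound
  have hIub : I t ≤ 4/μ * M * f (ρ t - 2*M) := by
    have h1 : I t ≤ ∫ s in (0:ℝ)..t, (f (ρ s - 2*M) - f (ρ s)) := by
      rw [hIteq]
      apply intervalIntegral.integral_mono_on ht hfYρint hupcont.intervalIntegrable
      intro x hx
      have := (hYbd x hx).1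
      exact sub_le_sub_right (hfanti this) _
    have h2 := key2 (fun x => f (x - 2*M) - f x)
      ((hfcont.comp (continuous_id.sub continuous_const)).sub hfcont)
      (fun x => sub_nonneg.mpr (hfanti (by linarith)))
    have h3 : 2/μ * (∫ u in (ρ t)..(ρ 0), (f (u - 2*M) - f u)) ≤
        2/μ * (2*M * f (ρ t - 2*M)) := by
      apply mul_le_mul_of_nonneg_left hshift_up
      positivity
    calc I t ≤ ∫ s in (0:ℝ)..t, (f (ρ s - 2*M) - f (ρ s)) := h1
      _ ≤ 2/μ * ∫ u in (ρ t)..(ρ 0), (f (u - 2*M) - f u) := h2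
      _ ≤ 2/μ * (2*M * f (ρ t - 2*M)) := h3
      _ = 4/μ * M * f (ρ t - 2*M) := by ring
  -- lower bound
  have hIlb : -(4/μ * M * f (ρ t - 2*M)) ≤ I t := by
    have h1 : ∫ s in (0:ℝ)..t, (f (ρ s + 2*M) - f (ρ s)) ≤ I t := by
      rw [hIteq]
      apply intervalIntegral.integral_mono_on ht hdncont.intervalIntegrable hfYρint
      intro x hx
      have := (hYbd x hx).2
      exact sub_le_sub_right (hfanti this) _
    have h2 : ∫ s in (0:ℝ)..t, (f (ρ s + 2*M) - f (ρ s)) =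
        - ∫ s in (0:ℝ)..t, (f (ρ s) - f (ρ s + 2*M)) := by
      rw [← intervalIntegral.integral_neg]
      congr 1
      ext s
      ring
    have h3 := key2 (fun x => f x - f (x + 2*M))
      (hfcont.sub (hfcont.comp (continuous_id.add continuous_const)))
      (fun x => sub_nonneg.mpr (hfanti (by linarith)))
    have h4 : 2/μ * (∫ u in (ρ t)..(ρ 0), (f u - f (u + 2*M))) ≤
        2/μ * (2*M * f (ρ t - 2*M)) := by
      apply mul_le_mul_of_nonneg_left hshift_dn
      positivity
    have h5 : ∫ s in (0:ℝ)..t, (f (ρ s) - f (ρ s + 2*M)) ≤ 4/μ * M * f (ρ t - 2*M) := by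
      calc ∫ s in (0:ℝ)..t, (f (ρ s) - f (ρ s + 2*M))
          ≤ 2/μ * ∫ u in (ρ t)..(ρ 0), (f u - f (u + 2*M)) := h3
        _ ≤ 2/μ * (2*M * f (ρ t - 2*M)) := h4
        _ = 4/μ * M * f (ρ t - 2*M) := by ring
    linarith
  rw [hItdef, abs_le]
  constructor
  · calc -((4/μ) * M * f (ρ t - 2*M)) = -(4/μ * M * f (ρ t - 2*M)) := by ring
      _ ≤ I t := hIlb
  · calc I t ≤ 4/μ * M * f (ρ t - 2*M) := hIub
      _ = (4/μ) * M * f (ρ t - 2*M) := by ring
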